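/- For every nonempty set E ⊆ ℝ^d and all reals r > 0 and ε > 0, vol(E_{r+ε}) ≤ vol(E_r) + (d·ε/r) · vol(E_{r+ε}). -/

import Mathlib

open MeasureTheory Metric Filter Set
open scoped ENNReal Topology

/-- Bernoulli-type inequality: `(1 - d·x)(1 + x)^d ≤ 1` for `x ≥ 0`. -/
lemma volThick_bernoulli_aux (d : ℕ) {x : ℝ} (hx : 0 ≤ x) :
    (1 - (d : ℝ) * x) * (1 + x) ^ d ≤ 1 := by
  induction d with
  | zero => simp
  | succ n ih =>
    have h1 : (1 - ((n : ℝ) + 1) * x) * (1 + x) ≤ 1 - (n : ℝ) * x := by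
      nlinarith [mul_nonneg (Nat.cast_nonneg (α := ℝ) n) (mul_nonneg hx hx), mul_nonneg hx hx]
    calc (1 - ((n + 1 : ℕ) : ℝ) * x) * (1 + x) ^ (n + 1)
        = ((1 - ((n : ℝ) + 1) * x) * (1 + x)) * (1 + x) ^ n := by push_cast; ring
      _ ≤ (1 - (n : ℝ) * x) * (1 + x) ^ n :=
          mul_le_mul_of_nonneg_right h1 (by positivity)
      _ ≤ 1 := ih

set_option maxHeartbeats 1600000 in
/-- Scaling bound for a finite union of balls: contracting each piece of the
"nearest-center" partition toward its center gives disjoint subsets of the small balls. -/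
lemma volThick_finite_balls (d n : ℕ) (x : Fin n → EuclideanSpace ℝ (Fin d))
    {c t : ℝ} (hc : 1 < c) (ht : 0 < t) :
    volume (⋃ i, ball (x i) (c * t)) ≤
      ENNReal.ofReal (c ^ d) * volume (⋃ i, ball (x i) t) := by
  have hc0 : (0:ℝ) < c := lt_trans one_pos hc
  set T : Fin n → Set (EuclideanSpace ℝ (Fin d)) := fun i =>
    {y | dist y (x i) < c * t} ∩ (⋂ j, {y | dist y (x i) ≤ dist y (x j)}) ∩
      (⋂ j, ⋂ _ : j < i, {y | dist y (x i) < dist y (x j)}) with hTdef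
  have hTmem : ∀ i y, y ∈ T i ↔ dist y (x i) < c * t ∧ (∀ j, dist y (x i) ≤ dist y (x j)) ∧
      (∀ j, j < i → dist y (x i) < dist y (x j)) := by
    intro i y
    simp [hTdef, and_assoc]
  have hTmeas : ∀ i, MeasurableSet (T i) := by
    intro i
    apply MeasurableSet.inter
    · apply MeasurableSet.inter
      · exact measurableSet_lt (measurable_id.dist measurable_const) measurable_const
      · exact MeasurableSet.iInter fun j =>
          measurableSet_le (measurable_id.dist measurable_const)
            (measurable_id.dist measurable_const)
    · exact MeasurableSet.iInter fun j => MeasurableSet.iInter fun _ =>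
        measurableSet_lt (measurable_id.dist measurable_const)
          (measurable_id.dist measurable_const)
  -- the cells cover the union of big balls
  have hcover : (⋃ i, ball (x i) (c * t)) = ⋃ i, T i := by
    apply Set.Subset.antisymm
    · rintro y hy
      obtain ⟨k, hk⟩ := Set.mem_iUnion.1 hy
      obtain ⟨i0, -, hi0⟩ := Finset.exists_min_image (Finset.univ : Finset (Fin n))
        (fun j => dist y (x j)) ⟨k, Finset.mem_univ k⟩
      set F : Finset (Fin n) := Finset.univ.filter (fun j => dist y (x j) ≤ dist y (x i0))
        with hF
      have hi0F : i0 ∈ F := by simp [hF]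
      set i := F.min' ⟨i0, hi0F⟩ with hi
      have hiF : i ∈ F := F.min'_mem _
      have hile : dist y (x i) ≤ dist y (x i0) := by
        simpa [hF] using hiF
      refine Set.mem_iUnion.2 ⟨i, (hTmem i y).2 ⟨?_, ?_, ?_⟩⟩
      · exact lt_of_le_of_lt (le_trans hile (hi0 k (Finset.mem_univ k))) (mem_ball.1 hk)
      · exact fun j => le_trans hile (hi0 j (Finset.mem_univ j))
      · intro j hj
        have hjF : j ∉ F := fun hjF => absurd (F.min'_le j hjF) (not_le.2 hj)
        have : ¬ dist y (x j) ≤ dist y (x i0) := by simpa [hF] using hjF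
        exact lt_of_le_of_lt hile (not_le.1 this)
    · exact Set.iUnion_mono fun i y hy => mem_ball.2 ((hTmem i y).1 hy).1
  -- the contracted cells
  set f : Fin n → (EuclideanSpace ℝ (Fin d)) → (EuclideanSpace ℝ (Fin d)) :=
    fun i => AffineMap.homothety (x i) c⁻¹ with hfdef
  have hfapply : ∀ i y, f i y = c⁻¹ • (y - x i) + x i := by
    intro i y
    simp [hfdef, AffineMap.homothety_apply, vsub_eq_sub, vadd_eq_add]
  -- inverse of the contraction
  have hginv : ∀ i, Function.LeftInverse (AffineMap.homothety (x i) c) (f i) ∧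
      Function.RightInverse (AffineMap.homothety (x i) c) (f i) := by
    intro i
    constructor <;> intro y <;>
      simp [hfdef, AffineMap.homothety_apply, vsub_eq_sub, vadd_eq_add, smul_smul,
        mul_inv_cancel₀ (ne_of_gt hc0), inv_mul_cancel₀ (ne_of_gt hc0)]
  have himgmeas : ∀ i, MeasurableSet (f i '' T i) := by
    intro i
    rw [Set.image_eq_preimage_of_inverse (hginv i).1 (hginv i).2]
    exact ((AffineMap.homothety (x i) c).continuous_of_finiteDimensional).measurable (hTmeas i)
  -- contracted cells sit inside the small balls
  have himgball : ∀ i, f i '' T i ⊆ ball (x i) t := by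
    rintro i w ⟨y, hy, rfl⟩
    have h1 := ((hTmem i y).1 hy).1
    rw [mem_ball, hfapply, dist_eq_norm]
    have : c⁻¹ • (y - x i) + x i - x i = c⁻¹ • (y - x i) := by abel
    rw [this, norm_smul, Real.norm_eq_abs, abs_of_pos (inv_pos.2 hc0)]
    calc c⁻¹ * ‖y - x i‖ < c⁻¹ * (c * t) := by
          apply mul_lt_mul_of_pos_left _ (inv_pos.2 hc0)
          rwa [← dist_eq_norm]
      _ = t := by field_simp
  -- key geometric disjointness
  have hkey : ∀ i j : Fin n, i < j → ∀ w, w ∈ f i '' T i → w ∈ f j '' T j → False := by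
    rintro i j hij w ⟨y, hy, hyw⟩ ⟨z, hz, hzw⟩
    set a := w - x i with ha
    set b := w - x j with hb
    have hya : y - x i = c • a := by
      have h' : c⁻¹ • (y - x i) = w - x i := by rw [← hyw, hfapply]; abel
      rw [ha, ← h', smul_smul, mul_inv_cancel₀ (ne_of_gt hc0), one_smul]
    have hzb : z - x j = c • b := by
      have h' : c⁻¹ • (z - x j) = w - x j := by rw [← hzw, hfapply]; abel
      rw [hb, ← h', smul_smul, mul_inv_cancel₀ (ne_of_gt hc0), one_smul]
    have hyj : y - x j = (c - 1) • a + b := by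
      have h1 : y - x j = (y - x i) + (x i - x j) := by abel
      have h2 : x i - x j = b - a := by rw [ha, hb]; abel
      rw [h1, hya, h2, sub_smul, one_smul]; abel
    have hzi : z - x i = (c - 1) • b + a := by
      have h1 : z - x i = (z - x j) + (x j - x i) := by abel
      have h2 : x j - x i = a - b := by rw [ha, hb]; abel
      rw [h1, hzb, h2, sub_smul, one_smul]; abel
    have hy2 := ((hTmem i y).1 hy).2.1 j
    have hz2 := ((hTmem j z).1 hz).2.2 i hij
    rw [dist_eq_norm, dist_eq_norm, hya, hyj] at hy2
    rw [dist_eq_norm, dist_eq_norm, hzb, hzi] at hz2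
    have hna : ‖c • a‖ = c * ‖a‖ := by
      rw [norm_smul, Real.norm_eq_abs, abs_of_pos hc0]
    have hnb : ‖c • b‖ = c * ‖b‖ := by
      rw [norm_smul, Real.norm_eq_abs, abs_of_pos hc0]
    rw [hna] at hy2
    rw [hnb] at hz2
    have e1 : (c * ‖a‖) ^ 2 ≤ ‖(c - 1) • a + b‖ ^ 2 := by
      apply pow_le_pow_left₀ (by positivity) hy2 2
    have e2 : (c * ‖b‖) ^ 2 < ‖(c - 1) • b + a‖ ^ 2 := by
      apply pow_lt_pow_left₀ hz2 (by positivity) (by norm_num)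
    have expand1 : ‖(c - 1) • a + b‖ ^ 2
        = (c - 1) ^ 2 * ‖a‖ ^ 2 + 2 * ((c - 1) * inner ℝ a b) + ‖b‖ ^ 2 := by
      rw [norm_add_sq_real, real_inner_smul_left, norm_smul, Real.norm_eq_abs,
        mul_pow, sq_abs]
    have expand2 : ‖(c - 1) • b + a‖ ^ 2
        = (c - 1) ^ 2 * ‖b‖ ^ 2 + 2 * ((c - 1) * inner ℝ a b) + ‖a‖ ^ 2 := by
      rw [norm_add_sq_real, real_inner_smul_left, norm_smul, Real.norm_eq_abs,
        mul_pow, sq_abs, real_inner_comm]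
    have e3 : (0:ℝ) ≤ ‖a‖ ^ 2 - 2 * inner ℝ a b + ‖b‖ ^ 2 := by
      have := norm_sub_sq_real a b
      nlinarith [sq_nonneg ‖a - b‖]
    rw [expand1] at e1
    rw [expand2] at e2
    nlinarith [mul_nonneg (sub_nonneg.2 hc.le) e3]
  -- disjointness of the contracted cells
  have hdisj : Pairwise (Function.onFun Disjoint fun i => f i '' T i) := by
    intro i j hij
    rcases lt_or_gt_of_ne hij with h | h
    · exact Set.disjoint_left.2 fun w hwi hwj => hkey i j h w hwi hwj
    · exact Set.disjoint_left.2 fun w hwi hwj => hkey j i h w hwj hwi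
  -- volume of cell via homothety
  have hvolcell : ∀ i, volume (T i) = ENNReal.ofReal (c ^ d) * volume (f i '' T i) := by
    intro i
    have : volume (f i '' T i)
        = ENNReal.ofReal |c⁻¹ ^ Module.finrank ℝ (EuclideanSpace ℝ (Fin d))| * volume (T i) :=
      MeasureTheory.Measure.addHaar_image_homothety volume (x i) c⁻¹ (T i)
    rw [this, finrank_euclideanSpace_fin, ← mul_assoc, ← ENNReal.ofReal_mul (by positivity)]
    rw [abs_of_pos (by positivity), ← mul_pow, mul_inv_cancel₀ (ne_of_gt hc0), one_pow,
      ENNReal.ofReal_one, one_mul]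
  calc volume (⋃ i, ball (x i) (c * t)) = volume (⋃ i, T i) := by rw [hcover]
    _ ≤ ∑' i, volume (T i) := measure_iUnion_le _
    _ = ∑' i, ENNReal.ofReal (c ^ d) * volume (f i '' T i) := by
        exact tsum_congr fun i => hvolcell i
    _ = ENNReal.ofReal (c ^ d) * ∑' i, volume (f i '' T i) := ENNReal.tsum_mul_left
    _ = ENNReal.ofReal (c ^ d) * volume (⋃ i, f i '' T i) := by
        rw [measure_iUnion hdisj himgmeas]
    _ ≤ ENNReal.ofReal (c ^ d) * volume (⋃ i, ball (x i) t) := by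
        apply mul_le_mul_right
        exact measure_mono (Set.iUnion_mono himgball)

/-- Scaling bound for thickenings: `vol(E_{ct}) ≤ c^d · vol(E_t)` for `c > 1`. -/
lemma volThick_scaling (d : ℕ) (E : Set (EuclideanSpace ℝ (Fin d)))
    {c t : ℝ} (hc : 1 < c) (ht : 0 < t) :
    volume (Metric.thickening (c * t) E) ≤
      ENNReal.ofReal (c ^ d) * volume (Metric.thickening t E) := by
  rw [(isOpen_thickening).measure_eq_iSup_isCompact volume]
  refine iSup_le fun K => iSup_le fun hKU => iSup_le fun hK => ?_
  have hcov : K ⊆ ⋃ x ∈ E, ball x (c * t) := by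
    rwa [← thickening_eq_biUnion_ball]
  obtain ⟨s, hsE, hsfin, hKs⟩ :=
    hK.elim_finite_subcover_image (fun x _ => isOpen_ball) hcov
  obtain ⟨n, g, hg⟩ := hsfin.fin_embedding
  have hKs' : K ⊆ ⋃ i, ball (g i) (c * t) := by
    rwa [← hg, Set.biUnion_range] at hKs
  calc volume K ≤ volume (⋃ i, ball (g i) (c * t)) := measure_mono hKs'
    _ ≤ ENNReal.ofReal (c ^ d) * volume (⋃ i, ball (g i) t) :=
        volThick_finite_balls d n (fun i => g i) hc ht
    _ ≤ ENNReal.ofReal (c ^ d) * volume (Metric.thickening t E) := by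
        apply mul_le_mul_right
        apply measure_mono
        apply Set.iUnion_subset fun i => ?_
        exact ball_subset_thickening (hsE (hg ▸ Set.mem_range_self i)) t

/-- For every nonempty `E ⊆ ℝ^d` and all reals `r > 0`, `ε > 0`,
`vol(E_{r+ε}) ≤ vol(E_r) + (d·ε/r) · vol(E_{r+ε})`. -/
theorem volume_thickening_add_le (d : ℕ) (E : Set (EuclideanSpace ℝ (Fin d)))
    (hE : E.Nonempty) (r ε : ℝ) (hr : 0 < r) (hε : 0 < ε) :
    volume (Metric.thickening (r + ε) E) ≤
      volume (Metric.thickening r E) +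
        ENNReal.ofReal (d * ε / r) * volume (Metric.thickening (r + ε) E) := by
  set V := volume (Metric.thickening (r + ε) E) with hV
  set k : ℝ := d * ε / r with hk
  have hk0 : 0 ≤ k := by positivity
  rcases le_or_gt 1 k with hk1 | hk1
  · have h1 : (1 : ℝ≥0∞) ≤ ENNReal.ofReal k := by
      rw [← ENNReal.ofReal_one]
      exact ENNReal.ofReal_le_ofReal hk1
    calc V = 1 * V := (one_mul V).symm
      _ ≤ ENNReal.ofReal k * V := mul_le_mul_left h1 V
      _ ≤ volume (Metric.thickening r E) + ENNReal.ofReal k * V := le_add_self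
  · set c : ℝ := (r + ε) / r with hc
    have hc1 : 1 < c := by
      rw [hc, lt_div_iff₀ hr]
      linarith
    have hscale : V ≤ ENNReal.ofReal (c ^ d) * volume (Metric.thickening r E) := by
      have hcr : c * r = r + ε := by rw [hc]; exact div_mul_cancel₀ _ (ne_of_gt hr)
      rw [hV, ← hcr]
      exact volThick_scaling d E hc1 hr
    have hbern : (1 - k) * c ^ d ≤ 1 := by
      have hx : (0:ℝ) ≤ ε / r := by positivity
      have h1 : c = 1 + ε / r := by rw [hc, add_div, div_self (ne_of_gt hr)]
      have h2 : k = (d : ℝ) * (ε / r) := by rw [hk, mul_div_assoc]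
      rw [h1, h2]
      exact volThick_bernoulli_aux d hx
    have hkey : ENNReal.ofReal (1 - k) * V ≤ volume (Metric.thickening r E) := by
      calc ENNReal.ofReal (1 - k) * V
          ≤ ENNReal.ofReal (1 - k) * (ENNReal.ofReal (c ^ d) * volume (Metric.thickening r E)) :=
            mul_le_mul_right hscale _
        _ = ENNReal.ofReal ((1 - k) * c ^ d) * volume (Metric.thickening r E) := by
            rw [← mul_assoc, ← ENNReal.ofReal_mul (by linarith)]
        _ ≤ 1 * volume (Metric.thickening r E) := by
            apply mul_le_mul_left
            rw [← ENNReal.ofReal_one]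
            exact ENNReal.ofReal_le_ofReal hbern
        _ = volume (Metric.thickening r E) := one_mul _
    calc V = (ENNReal.ofReal (1 - k) + ENNReal.ofReal k) * V := by
          rw [← ENNReal.ofReal_add (by linarith) hk0, sub_add_cancel, ENNReal.ofReal_one, one_mul]
      _ = ENNReal.ofReal (1 - k) * V + ENNReal.ofReal k * V := add_mul _ _ _
      _ ≤ volume (Metric.thickening r E) + ENNReal.ofReal k * V := add_le_add_left hkey _
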